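/- Let η(u, χ) = sign(u)·(|u| − χ)₊ be the soft thresholding function, and let ω be a random variable that is a mixture of centered Gaussians: there is a random variable θ with ω | θ ~ N(0, σ_θ²), where σ_θ > 0 almost surely and E σ_θ² < ∞. For χ₁ > 0, χ₂ ≥ 0 define g(u; χ₁, χ₂) = E( (1/(1+χ₂))·η(u + ω, χ₁) − u )² for u ∈ ℝ. Then: (i) u ↦ g(u; χ₁, χ₂) is an even function and is nondecreasing on [0, ∞); (ii) for every c > 0, max over pairs (x, y) with x² + y² = c² of [g(x; χ₁, χ₂) + g(y; χ₁, χ₂)] equals 2·g(c/√2; χ₁, χ₂). -/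

import Mathlib

open MeasureTheory ProbabilityTheory
open scoped NNReal ENNReal

noncomputable section

/-- The soft thresholding function `η(u, χ) = sign(u) (|u| − χ)₊`. -/
def softThreshold (u χ : ℝ) : ℝ := Real.sign u * max (|u| - χ) 0

/-- The law of a centered-Gaussian mixture `ω`: given `θ`, `ω | θ ~ N(0, σ_θ²)`.
Here `ν` is the law of the (conditional) variance `σ_θ²`. -/
def mixtureLaw (ν : Measure ℝ≥0) : Measure ℝ := ν.bind fun s => gaussianReal 0 s

/-- `g(u; χ₁, χ₂) = E((1/(1+χ₂)) η(u + ω, χ₁) − u)²` where `ω` is the Gaussian mixture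
with variance-law `ν`. -/
def gRisk (ν : Measure ℝ≥0) (χ₁ χ₂ : ℝ) (u : ℝ) : ℝ :=
  ∫ w, ((1 / (1 + χ₂)) * softThreshold (u + w) χ₁ - u) ^ 2 ∂ mixtureLaw ν


namespace SoftAux

open Metric


variable {χ x y : ℝ}

lemma st_of_ge (hχ : 0 ≤ χ) (h : χ ≤ x) : softThreshold x χ = x - χ := by
  unfold softThreshold
  rcases eq_or_lt_of_le (hχ.trans h) with h0 | h0
  · have hx0 : χ = 0 := le_antisymm (h.trans h0.symm.le) hχ
    simp [← h0, hx0]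
  · rw [Real.sign_of_pos h0, abs_of_pos h0, max_eq_left (by linarith)]; ring

lemma st_of_le (hχ : 0 ≤ χ) (h : x ≤ -χ) : softThreshold x χ = x + χ := by
  unfold softThreshold
  rcases eq_or_lt_of_le (h.trans (neg_nonpos.mpr hχ)) with h0 | h0
  · have hx0 : χ = 0 := by nlinarith [neg_nonpos.mpr hχ]
    simp [h0, hx0]
  · rw [Real.sign_of_neg h0, abs_of_neg h0, max_eq_left (by linarith)]; ring

lemma st_of_mem (h1 : -χ ≤ x) (h2 : x ≤ χ) : softThreshold x χ = 0 := by
  unfold softThreshold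
  have : |x| - χ ≤ 0 := by
    rcases abs_cases x with ⟨h, _⟩ | ⟨h, _⟩ <;> linarith
  rw [max_eq_right this, mul_zero]

lemma st_neg (x χ : ℝ) : softThreshold (-x) χ = - softThreshold x χ := by
  unfold softThreshold
  rw [abs_neg, Real.sign_neg]; ring

lemma st_cases (hχ : 0 ≤ χ) (x : ℝ) :
    (x ≤ -χ ∧ softThreshold x χ = x + χ) ∨
    ((-χ ≤ x ∧ x ≤ χ) ∧ softThreshold x χ = 0) ∨
    (χ ≤ x ∧ softThreshold x χ = x - χ) := by
  rcases le_total x (-χ) with h | h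
  · exact Or.inl ⟨h, st_of_le hχ h⟩
  · rcases le_total x χ with h2 | h2
    · exact Or.inr (Or.inl ⟨⟨h, h2⟩, st_of_mem h h2⟩)
    · exact Or.inr (Or.inr ⟨h2, st_of_ge hχ h2⟩)

lemma st_mono_lip (hχ : 0 ≤ χ) (h : y ≤ x) :
    0 ≤ softThreshold x χ - softThreshold y χ ∧
      softThreshold x χ - softThreshold y χ ≤ x - y := by
  rcases st_cases hχ x with ⟨hx, ex⟩ | ⟨hx, ex⟩ | ⟨hx, ex⟩ <;>
    rcases st_cases hχ y with ⟨hy, ey⟩ | ⟨hy, ey⟩ | ⟨hy, ey⟩ <;>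
    rw [ex, ey] <;> constructor <;> linarith

lemma st_abs_le (hχ : 0 ≤ χ) (x : ℝ) : |softThreshold x χ| ≤ |x| := by
  rcases st_cases hχ x with ⟨hx, ex⟩ | ⟨hx, ex⟩ | ⟨hx, ex⟩ <;> rw [ex] <;>
    rw [abs_le] <;> constructor <;> rcases abs_cases x with ⟨h, _⟩ | ⟨h, _⟩ <;> linarith

lemma st_lip (hχ : 0 ≤ χ) (x y : ℝ) :
    |softThreshold x χ - softThreshold y χ| ≤ |x - y| := by
  rcases le_total y x with h | h
  · obtain ⟨h1, h2⟩ := st_mono_lip hχ h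
    rw [abs_of_nonneg h1]; exact h2.trans (le_abs_self _)
  · obtain ⟨h1, h2⟩ := st_mono_lip hχ h
    rw [abs_sub_comm, abs_sub_comm x y, abs_of_nonneg h1]
    exact h2.trans (le_abs_self _)

lemma st_eq_clamp (hχ : 0 ≤ χ) (x : ℝ) :
    softThreshold x χ = x - max (min x χ) (-χ) := by
  rcases st_cases hχ x with ⟨hx, ex⟩ | ⟨hx, ex⟩ | ⟨hx, ex⟩ <;> rw [ex]
  · rw [min_eq_left (by linarith), max_eq_right (by linarith)]; ring
  · rw [min_eq_left hx.2, max_eq_left hx.1]; ring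
  · rw [min_eq_right hx, max_eq_left (by linarith)]

lemma st_continuous (hχ : 0 ≤ χ) : Continuous (fun x => softThreshold x χ) := by
  simp only [st_eq_clamp hχ]
  exact continuous_id.sub ((continuous_id.min continuous_const).max continuous_const)

lemma st_measurable (hχ : 0 ≤ χ) : Measurable (fun x => softThreshold x χ) :=
  (st_continuous hχ).measurable

lemma st_hasDerivAt_shift (hχ : 0 < χ) {w u : ℝ} (h : |u + w| ≠ χ) :
    HasDerivAt (fun x => softThreshold (x + w) χ)
      (if χ < |u + w| then 1 else 0) u := by
  rcases lt_or_gt_of_ne h with h' | h'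
  · -- |u+w| < χ : locally zero
    rw [if_neg (by linarith)]
    have hev : ∀ᶠ x in nhds u, softThreshold (x + w) χ = 0 := by
      have : Continuous fun x : ℝ => |x + w| := (continuous_id.add continuous_const).abs
      have hopen : IsOpen {x : ℝ | |x + w| < χ} := isOpen_lt this continuous_const
      filter_upwards [hopen.mem_nhds (by simpa using h')] with x hx
      rcases abs_lt.1 hx with ⟨h1, h2⟩
      exact st_of_mem (by linarith) (by linarith)
    exact (hasDerivAt_const u (0:ℝ)).congr_of_eventuallyEq (by filter_upwards [hev] with x hx; simp [hx])
  · rw [if_pos h']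
    rcases lt_abs.1 h' with h2 | h2
    · -- u + w > χ
      have hev : ∀ᶠ x in nhds u, softThreshold (x + w) χ = x + w - χ := by
        have hopen : IsOpen {x : ℝ | χ < x + w} := isOpen_lt continuous_const (continuous_id.add continuous_const)
        filter_upwards [hopen.mem_nhds h2] with x hx
        exact st_of_ge hχ.le (le_of_lt hx)
      have : HasDerivAt (fun x : ℝ => x + w - χ) 1 u := by
        simpa using ((hasDerivAt_id u).add_const w).sub_const χ
      exact this.congr_of_eventuallyEq hev
    · -- u + w < -χ
      have hev : ∀ᶠ x in nhds u, softThreshold (x + w) χ = x + w + χ := by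
        have hopen : IsOpen {x : ℝ | x + w < -χ} := isOpen_lt (continuous_id.add continuous_const) continuous_const
        filter_upwards [hopen.mem_nhds (show u + w < -χ by linarith)] with x hx
        exact st_of_le hχ.le (le_of_lt hx)
      have : HasDerivAt (fun x : ℝ => x + w + χ) 1 u := by
        simpa using ((hasDerivAt_id u).add_const w).add_const χ
      exact this.congr_of_eventuallyEq hev

lemma st_pair_le (hχ : 0 ≤ χ) {u : ℝ} (hu : 0 ≤ u) (w : ℝ) :
    softThreshold (u + w) χ + softThreshold (u - w) χ ≤ 2 * u := by
  have h1 : softThreshold (u - w) χ = - softThreshold (w - u) χ := by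
    rw [← st_neg]; ring_nf
  rw [h1]
  have h2 := (st_mono_lip hχ (show w - u ≤ u + w by linarith)).2
  linarith




lemma meas_ker : Measurable (fun s : ℝ≥0 => gaussianReal 0 s) := by
  apply Measure.measurable_of_measurable_coe
  intro A hA
  have hrw : ∀ s : ℝ≥0, gaussianReal 0 s A
      = if s = 0 then Measure.dirac 0 A else ∫⁻ x, A.indicator (gaussianPDF 0 s) x := by
    intro s
    by_cases hs : s = 0
    · simp [hs, gaussianReal_zero_var]
    · rw [gaussianReal_of_var_ne_zero 0 hs, withDensity_apply _ hA, if_neg hs,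
        ← lintegral_indicator hA]
  simp only [hrw]
  refine Measurable.ite (measurableSet_singleton 0) measurable_const ?_
  have hjoint : Measurable (fun p : ℝ≥0 × ℝ => A.indicator (gaussianPDF 0 p.1) p.2) := by
    have hco : Measurable (fun p : ℝ≥0 × ℝ => ((p.1 : ℝ))) :=
      measurable_coe_nnreal_real.comp measurable_fst
    have h1 : Measurable (fun p : ℝ≥0 × ℝ => gaussianPDF 0 p.1 p.2) := by
      unfold gaussianPDF gaussianPDFReal
      apply Measurable.ennreal_ofReal
      apply Measurable.mul
      · exact (Real.continuous_sqrt.measurable.comp (hco.const_mul (2 * Real.pi))).inv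
      · apply Real.measurable_exp.comp
        exact (((measurable_snd.sub measurable_const).pow_const 2).neg).div (hco.const_mul 2)
    exact h1.indicator (measurable_snd hA)
  exact hjoint.lintegral_prod_right'

lemma g_sym (s : ℝ≥0) : (gaussianReal 0 s).map (fun x => -x) = gaussianReal 0 s := by
  have h := gaussianReal_map_const_mul (μ := 0) (v := s) (-1)
  have heq : (fun x : ℝ => -x) = ((-1 : ℝ) * ·) := by funext x; simp
  have h2 : (NNReal.mk ((-1:ℝ)^2) (sq_nonneg _) : ℝ≥0) = 1 := by ext; norm_num
  rw [heq, h, h2, one_mul, show (-1:ℝ) * 0 = 0 by ring]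

lemma g_noatom {s : ℝ≥0} (hs : s ≠ 0) (x : ℝ) : gaussianReal 0 s {x} = 0 :=
  gaussianReal_absolutelyContinuous 0 hs Real.volume_singleton

lemma pdf_even (s : ℝ≥0) (x : ℝ) : gaussianPDFReal 0 s (-x) = gaussianPDFReal 0 s x := by
  unfold gaussianPDFReal
  norm_num

lemma pdf_continuous (s : ℝ≥0) : Continuous (gaussianPDFReal 0 s) := by
  unfold gaussianPDFReal
  refine continuous_const.mul (Real.continuous_exp.comp ?_)
  exact (((continuous_id.sub continuous_const).pow 2).neg).div_const _

lemma g_mom {s : ℝ≥0} (hs : s ≠ 0) :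
    ∫⁻ x, ENNReal.ofReal (x ^ 2) ∂gaussianReal 0 s ≤ 3 * (s : ℝ≥0∞) := by
  have hspos : (0:ℝ) < (s:ℝ) := by
    have := pos_iff_ne_zero.mpr hs
    exact_mod_cast this
  set c1 : ℝ := (Real.sqrt (2 * Real.pi * s))⁻¹ with hc1
  have hc1nn : (0:ℝ) ≤ c1 := by positivity
  set b : ℝ := 1 / (4 * s) with hb
  have hbpos : 0 < b := by positivity
  have hbound : ∀ x : ℝ, gaussianPDFReal 0 s x * x ^ 2
      ≤ c1 * (4 * s * Real.exp (-1)) * Real.exp (-b * x ^ 2) := by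
    intro x
    have hpdf : gaussianPDFReal 0 s x = c1 * Real.exp (-x ^ 2 / (2 * s)) := by
      unfold gaussianPDFReal
      rw [← hc1]
      norm_num
    rw [hpdf]
    have hsplit : Real.exp (-x ^ 2 / (2 * s)) = Real.exp (-b * x ^ 2) * Real.exp (-b * x ^ 2) := by
      rw [← Real.exp_add]
      congr 1
      rw [hb]
      field_simp
      ring
    have hkey : x ^ 2 * Real.exp (-b * x ^ 2) ≤ 4 * s * Real.exp (-1) := by
      have h1 : b * x ^ 2 ≤ Real.exp (b * x ^ 2 - 1) := by
        have := Real.add_one_le_exp (b * x ^ 2 - 1); linarith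
      have h2 : (b * x ^ 2) * Real.exp (-(b * x ^ 2)) ≤ Real.exp (-1) := by
        have h3 := mul_le_mul_of_nonneg_right h1 (Real.exp_nonneg (-(b * x ^ 2)))
        rw [← Real.exp_add] at h3
        have he : b * x ^ 2 - 1 + -(b * x ^ 2) = -1 := by ring
        rw [he] at h3
        exact h3
      have h4s : (0:ℝ) ≤ 4 * s := by positivity
      have h5 := mul_le_mul_of_nonneg_left h2 h4s
      have h4sb : 4 * (s:ℝ) * b = 1 := by rw [hb]; field_simp
      have hxx : 4 * (s:ℝ) * ((b * x ^ 2) * Real.exp (-(b * x ^ 2)))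
          = x ^ 2 * Real.exp (-b * x ^ 2) := by
        calc 4 * (s:ℝ) * ((b * x ^ 2) * Real.exp (-(b * x ^ 2)))
            = (4 * (s:ℝ) * b) * (x ^ 2 * Real.exp (-(b * x ^ 2))) := by ring
        _ = x ^ 2 * Real.exp (-(b * x ^ 2)) := by rw [h4sb, one_mul]
        _ = x ^ 2 * Real.exp (-b * x ^ 2) := by norm_num
      linarith [hxx ▸ h5]
    calc c1 * Real.exp (-x ^ 2 / (2 * s)) * x ^ 2
        = c1 * (x ^ 2 * Real.exp (-b * x ^ 2)) * Real.exp (-b * x ^ 2) := by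
          rw [hsplit]; ring
    _ ≤ c1 * (4 * s * Real.exp (-1)) * Real.exp (-b * x ^ 2) := by
          have := mul_le_mul_of_nonneg_left hkey hc1nn
          exact mul_le_mul_of_nonneg_right this (Real.exp_nonneg _)
  have hmeas2 : Measurable fun x : ℝ => ENNReal.ofReal (x ^ 2) :=
    (measurable_id.pow_const 2).ennreal_ofReal
  rw [gaussianReal_of_var_ne_zero 0 hs,
    lintegral_withDensity_eq_lintegral_mul _ (measurable_gaussianPDF 0 s) hmeas2]
  have hstep1 : ∫⁻ x, (gaussianPDF 0 s * fun x => ENNReal.ofReal (x ^ 2)) x ∂volume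
      ≤ ∫⁻ x, ENNReal.ofReal (c1 * (4 * s * Real.exp (-1)) * Real.exp (-b * x ^ 2)) ∂volume := by
    refine lintegral_mono fun x => ?_
    have : (gaussianPDF 0 s * fun x => ENNReal.ofReal (x ^ 2)) x
        = ENNReal.ofReal (gaussianPDFReal 0 s x * x ^ 2) := by
      simp only [Pi.mul_apply, gaussianPDF]
      rw [← ENNReal.ofReal_mul (gaussianPDFReal_nonneg 0 s x)]
    rw [this]
    exact ENNReal.ofReal_le_ofReal (hbound x)
  refine le_trans hstep1 ?_
  have hintg : Integrable (fun x : ℝ => c1 * (4 * s * Real.exp (-1)) * Real.exp (-b * x ^ 2)) volume :=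
    (integrable_exp_neg_mul_sq hbpos).const_mul _
  rw [← ofReal_integral_eq_lintegral_ofReal hintg (by
    filter_upwards with x
    positivity)]
  rw [integral_const_mul, integral_gaussian]
  have hsqrt : Real.sqrt (Real.pi / b) = Real.sqrt 2 * Real.sqrt (2 * Real.pi * s) := by
    rw [← Real.sqrt_mul (by norm_num : (0:ℝ) ≤ 2)]
    congr 1
    rw [hb]
    field_simp
    ring
  have hval : c1 * (4 * s * Real.exp (-1)) * Real.sqrt (Real.pi / b)
      = 4 * Real.exp (-1) * Real.sqrt 2 * s := by
    rw [hsqrt, hc1]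
    have hne : Real.sqrt (2 * Real.pi * s) ≠ 0 := by positivity
    field_simp
  rw [hval]
  have hconst : 4 * Real.exp (-1) * Real.sqrt 2 ≤ 3 := by
    have h1 : Real.sqrt 2 ≤ 1.5 := by
      rw [show (1.5:ℝ) = Real.sqrt (1.5 ^ 2) from (Real.sqrt_sq (by norm_num)).symm]
      exact Real.sqrt_le_sqrt (by norm_num)
    have h2 : (2.7182818283:ℝ) < Real.exp 1 := Real.exp_one_gt_d9
    have h3 : Real.exp (-1) * Real.exp 1 = 1 := by
      rw [← Real.exp_add]; norm_num
    have h4 : 0 < Real.exp (-1) := Real.exp_pos _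
    have h5 : 0 ≤ Real.sqrt 2 := Real.sqrt_nonneg 2
    nlinarith [mul_le_mul_of_nonneg_left h1 (le_of_lt h4)]
  calc ENNReal.ofReal (4 * Real.exp (-1) * Real.sqrt 2 * s)
      ≤ ENNReal.ofReal (3 * s) := by
        refine ENNReal.ofReal_le_ofReal ?_
        exact mul_le_mul_of_nonneg_right hconst (le_of_lt hspos)
  _ = 3 * (s : ℝ≥0∞) := by
        rw [ENNReal.ofReal_mul (by norm_num : (0:ℝ) ≤ 3), ENNReal.ofReal_coe_nnreal]
        norm_num



lemma g_icc_eq {s : ℝ≥0} (hs : s ≠ 0) {p q : ℝ} (hpq : p ≤ q) :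
    gaussianReal 0 s (Set.Icc p q)
      = ENNReal.ofReal ((∫ x in (0:ℝ)..q, gaussianPDFReal 0 s x)
        - ∫ x in (0:ℝ)..p, gaussianPDFReal 0 s x) := by
  rw [gaussianReal_apply_eq_integral 0 hs]
  congr 1
  have hii : ∀ u v : ℝ, IntervalIntegrable (gaussianPDFReal 0 s) volume u v :=
    fun u v => (integrable_gaussianPDFReal 0 s).intervalIntegrable
  rw [intervalIntegral.integral_interval_sub_left (hii 0 q) (hii 0 p)]
  rw [intervalIntegral.integral_of_le hpq]
  rw [MeasureTheory.integral_Icc_eq_integral_Ioc]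

lemma g_tail_mono {s : ℝ≥0} (hs : s ≠ 0) {χ : ℝ} (hχ : 0 < χ) {u v : ℝ}
    (hu : 0 ≤ u) (huv : u ≤ v) :
    gaussianReal 0 s {w : ℝ | χ < |u + w|} ≤ gaussianReal 0 s {w : ℝ | χ < |v + w|} := by
  -- complement sets are Icc
  have hcompl : ∀ t : ℝ, {w : ℝ | χ < |t + w|} = (Set.Icc (-χ - t) (χ - t))ᶜ := by
    intro t
    ext w
    simp only [Set.mem_setOf_eq, Set.mem_compl_iff, Set.mem_Icc, not_and_or, not_le]
    constructor
    · intro h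
      rcases lt_abs.mp h with h' | h'
      · right; linarith
      · left; linarith
    · intro h
      rcases h with h' | h'
      · rcases abs_cases (t + w) with ⟨he, _⟩ | ⟨he, _⟩ <;> rw [he] <;> linarith
      · rcases abs_cases (t + w) with ⟨he, _⟩ | ⟨he, _⟩ <;> rw [he] <;> linarith
  -- the Icc measure is antitone via FTC
  set Cd : ℝ → ℝ := fun y => ∫ x in (0:ℝ)..y, gaussianPDFReal 0 s x with hCd
  have hCdDeriv : ∀ y : ℝ, HasDerivAt Cd (gaussianPDFReal 0 s y) y := by
    intro y
    refine intervalIntegral.integral_hasDerivAt_right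
      ((integrable_gaussianPDFReal 0 s).intervalIntegrable)
      ((pdf_continuous s).stronglyMeasurable.stronglyMeasurableAtFilter)
      ((pdf_continuous s).continuousAt)
  set W : ℝ → ℝ := fun t => Cd (χ - t) - Cd (-χ - t) with hW
  have hWDeriv : ∀ t : ℝ, HasDerivAt W
      (gaussianPDFReal 0 s (-χ - t) - gaussianPDFReal 0 s (χ - t)) t := by
    intro t
    have h1 : HasDerivAt (fun t : ℝ => χ - t) (-1) t := by
      simpa using (hasDerivAt_id t).const_sub χ
    have h2 : HasDerivAt (fun t : ℝ => -χ - t) (-1) t := by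
      simpa using (hasDerivAt_id t).const_sub (-χ)
    have hc1 := (hCdDeriv (χ - t)).comp t h1
    have hc2 := (hCdDeriv (-χ - t)).comp t h2
    have := hc1.sub hc2
    refine this.congr_deriv ?_
    ring
  have hWanti : AntitoneOn W (Set.Ici 0) := by
    refine antitoneOn_of_deriv_nonpos (convex_Ici 0) ?_ ?_ ?_
    · exact fun t _ => (hWDeriv t).differentiableAt.continuousAt.continuousWithinAt
    · exact fun t ht => (hWDeriv t).differentiableAt.differentiableWithinAt
    · intro t ht
      rw [interior_Ici] at ht
      have ht' : (0:ℝ) < t := ht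
      rw [(hWDeriv t).deriv]
      have he : gaussianPDFReal 0 s (-χ - t) = gaussianPDFReal 0 s (χ + t) := by
        rw [show -χ - t = -(χ + t) by ring, pdf_even]
      rw [he]
      have hle : gaussianPDFReal 0 s (χ + t) ≤ gaussianPDFReal 0 s (χ - t) := by
        unfold gaussianPDFReal
        have hspos : (0:ℝ) < (s:ℝ) := by
          have := pos_iff_ne_zero.mpr hs
          exact_mod_cast this
        refine mul_le_mul_of_nonneg_left ?_ (by positivity)
        refine Real.exp_le_exp.mpr ?_
        refine div_le_div_of_nonneg_right ?_ (by positivity)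
        nlinarith [mul_pos hχ ht']
      linarith
  -- identify measures with W
  have hmeasIcc : ∀ t : ℝ, gaussianReal 0 s (Set.Icc (-χ - t) (χ - t)) = ENNReal.ofReal (W t) := by
    intro t
    rw [g_icc_eq hs (by linarith : -χ - t ≤ χ - t)]
  have hWle : W v ≤ W u := hWanti (Set.mem_Ici.mpr hu) (Set.mem_Ici.mpr (hu.trans huv)) huv
  rw [hcompl u, hcompl v]
  rw [measure_compl measurableSet_Icc (measure_ne_top _ _),
    measure_compl measurableSet_Icc (measure_ne_top _ _)]
  refine tsub_le_tsub_left ?_ _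
  rw [hmeasIcc u, hmeasIcc v]
  exact ENNReal.ofReal_le_ofReal hWle


/-! ### abstract measure level -/

def mfun (μ : Measure ℝ) (χ u : ℝ) : ℝ := ∫ w, softThreshold (u + w) χ ∂μ

def Pfun (μ : Measure ℝ) (χ u : ℝ) : ℝ := (μ {w | χ < |u + w|}).toReal

def Gfun (μ : Measure ℝ) (a χ u : ℝ) : ℝ := ∫ w, (a * softThreshold (u + w) χ - u) ^ 2 ∂μ

variable {μ : Measure ℝ} [IsProbabilityMeasure μ] {χ a : ℝ}

lemma measSet (χ u : ℝ) : MeasurableSet {w : ℝ | χ < |u + w|} :=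
  measurableSet_lt measurable_const (measurable_const.add measurable_id).abs

lemma Pfun_nonneg (μ : Measure ℝ) (χ u : ℝ) : 0 ≤ Pfun μ χ u := ENNReal.toReal_nonneg

lemma Pfun_le_one (μ : Measure ℝ) [IsProbabilityMeasure μ] (χ u : ℝ) : Pfun μ χ u ≤ 1 := by
  have h := prob_le_one (μ := μ) (s := {w | χ < |u + w|})
  have := ENNReal.toReal_mono (by simp) h
  simpa [Pfun] using this

lemma integrable_st (hχ : 0 ≤ χ) (habs : Integrable (fun w => |w|) μ) (u : ℝ) :
    Integrable (fun w => softThreshold (u + w) χ) μ := by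
  refine Integrable.mono' ((integrable_const |u|).add habs)
    (((st_measurable hχ).comp (measurable_const.add measurable_id)).aestronglyMeasurable) ?_
  filter_upwards with w
  calc ‖softThreshold (u + w) χ‖ = |softThreshold (u + w) χ| := rfl
  _ ≤ |u + w| := st_abs_le hχ _
  _ ≤ |u| + |w| := abs_add_le _ _

lemma integrable_sq (hχ : 0 ≤ χ) (ha0 : 0 ≤ a) (ha1 : a ≤ 1)
    (hmom : Integrable (fun w => w ^ 2) μ) (habs : Integrable (fun w => |w|) μ) (u : ℝ) :
    Integrable (fun w => (a * softThreshold (u + w) χ - u) ^ 2) μ := by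
  set c := |u| + |u| with hc
  have hgint : Integrable (fun w => (c + |w|) ^ 2) μ := by
    have : (fun w : ℝ => (c + |w|) ^ 2) = fun w => (c ^ 2 + 2 * c * |w|) + w ^ 2 := by
      funext w; rw [← sq_abs w]; ring
    rw [this]
    exact ((integrable_const _).add (habs.const_mul _)).add hmom
  refine Integrable.mono' hgint ?_ ?_
  · apply Measurable.aestronglyMeasurable
    exact ((((st_measurable hχ).comp (measurable_const.add measurable_id)).const_mul a).sub
      measurable_const).pow_const 2
  · filter_upwards with w
    have h1 : |a * softThreshold (u + w) χ - u| ≤ c + |w| := by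
      have := st_abs_le hχ (u + w)
      have habs2 : |a * softThreshold (u + w) χ| ≤ |u + w| := by
        rw [abs_mul, abs_of_nonneg ha0]
        nlinarith [abs_nonneg (softThreshold (u + w) χ)]
      calc |a * softThreshold (u + w) χ - u| ≤ |a * softThreshold (u + w) χ| + |u| := abs_sub _ _
      _ ≤ |u + w| + |u| := by linarith
      _ ≤ (|u| + |w|) + |u| := by linarith [abs_add_le u w]
      _ = c + |w| := by rw [hc]; ring
    have h2 : (0:ℝ) ≤ c + |w| := le_trans (abs_nonneg _) h1
    calc ‖(a * softThreshold (u + w) χ - u) ^ 2‖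
        = |a * softThreshold (u + w) χ - u| ^ 2 := by
          rw [Real.norm_eq_abs, abs_pow]
    _ ≤ (c + |w|) ^ 2 := by nlinarith [abs_nonneg (a * softThreshold (u + w) χ - u)]

lemma integral_comp_neg (hsym : μ.map (fun w => -w) = μ) {f : ℝ → ℝ}
    (hf : AEStronglyMeasurable f μ) : ∫ w, f (-w) ∂μ = ∫ w, f w ∂μ := by
  conv_rhs => rw [← hsym]
  rw [integral_map measurable_neg.aemeasurable]
  rw [hsym]; exact hf

lemma mfun_zero (hχ : 0 ≤ χ) (hsym : μ.map (fun w => -w) = μ) : mfun μ χ 0 = 0 := by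
  have hm : AEStronglyMeasurable (fun w => softThreshold (0 + w) χ) μ :=
    ((st_measurable hχ).comp (measurable_const.add measurable_id)).aestronglyMeasurable
  have h := integral_comp_neg hsym hm
  have heq : ∀ w : ℝ, softThreshold (0 + -w) χ = - softThreshold (0 + w) χ := by
    intro w; rw [zero_add, zero_add, ← st_neg]
  rw [show (fun w => softThreshold (0 + (-w)) χ) = fun w => - softThreshold (0 + w) χ from funext heq] at h
  rw [integral_neg] at h
  have : mfun μ χ 0 = ∫ w, softThreshold (0 + w) χ ∂μ := rfl
  rw [this]; linarith [h]

lemma mfun_le (hχ : 0 ≤ χ) (hsym : μ.map (fun w => -w) = μ)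
    (habs : Integrable (fun w => |w|) μ) {u : ℝ} (hu : 0 ≤ u) : mfun μ χ u ≤ u := by
  have hint : Integrable (fun w => softThreshold (u + w) χ) μ := integrable_st hχ habs u
  have hint2 : Integrable (fun w => softThreshold (u - w) χ) μ := by
    refine Integrable.mono' ((integrable_const |u|).add habs)
      (((st_measurable hχ).comp (measurable_const.sub measurable_id)).aestronglyMeasurable) ?_
    filter_upwards with w
    calc ‖softThreshold (u - w) χ‖ = |softThreshold (u - w) χ| := rfl
    _ ≤ |u - w| := st_abs_le hχ _
    _ ≤ |u| + |w| := abs_sub _ _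
  have hmm : mfun μ χ u = ∫ w, softThreshold (u - w) χ ∂μ := by
    have hm : AEStronglyMeasurable (fun w => softThreshold (u + w) χ) μ :=
      ((st_measurable hχ).comp (measurable_const.add measurable_id)).aestronglyMeasurable
    have h := integral_comp_neg hsym hm
    have heq : (fun w : ℝ => softThreshold (u + -w) χ) = fun w => softThreshold (u - w) χ := by
      funext w; rw [← sub_eq_add_neg]
    rw [heq] at h
    exact h.symm
  have hsum : mfun μ χ u + mfun μ χ u
      = ∫ w, (softThreshold (u + w) χ + softThreshold (u - w) χ) ∂μ := by
    rw [integral_add hint hint2]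
    rw [← hmm]
    rfl
  have hle : ∫ w, (softThreshold (u + w) χ + softThreshold (u - w) χ) ∂μ
      ≤ ∫ _w, (2 * u : ℝ) ∂μ := by
    refine integral_mono (hint.add hint2) (integrable_const _) ?_
    intro w
    exact st_pair_le hχ hu w
  rw [integral_const] at hle
  simp only [probReal_univ, ENNReal.toReal_one, smul_eq_mul, one_mul] at hle
  linarith [hsum, hle]

lemma hasDerivAt_mfun (hχ : 0 < χ) (hatom : ∀ x : ℝ, μ {x} = 0)
    (habs : Integrable (fun w => |w|) μ) (u₀ : ℝ) :
    HasDerivAt (mfun μ χ) (Pfun μ χ u₀) u₀ := by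
  have hae : ∀ᵐ w ∂μ, |u₀ + w| ≠ χ := by
    have hsub : {w : ℝ | ¬ |u₀ + w| ≠ χ} ⊆ {χ - u₀} ∪ {-χ - u₀} := by
      intro w hw
      simp only [Set.mem_setOf_eq, not_not] at hw
      rcases abs_eq (le_of_lt hχ) |>.mp hw with h | h
      · left; simp [show w = χ - u₀ by linarith]
      · right; simp [show w = -χ - u₀ by linarith]
    have h0 : μ ({χ - u₀} ∪ {-χ - u₀} : Set ℝ) = 0 :=
      le_antisymm (le_trans (measure_union_le _ _) (by rw [hatom, hatom]; simp)) zero_le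
    rw [ae_iff]
    exact le_antisymm (le_trans (measure_mono hsub) h0.le) zero_le
  have key := hasDerivAt_integral_of_dominated_loc_of_lip (F := fun x w => softThreshold (x + w) χ)
    (F' := fun w => Set.indicator {w : ℝ | χ < |u₀ + w|} (1 : ℝ → ℝ) w)
    (x₀ := u₀) (bound := fun _ => (1:ℝ)) (Metric.ball_mem_nhds u₀ one_pos)
    (Filter.Eventually.of_forall (fun x =>
      ((st_measurable hχ.le).comp (measurable_const.add measurable_id)).aestronglyMeasurable))
    (integrable_st hχ.le habs u₀)
    ((measurable_const.indicator (measSet χ u₀)).aestronglyMeasurable)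
    ?_ (integrable_const _) ?_
  · have h2 : ∫ w, Set.indicator {w : ℝ | χ < |u₀ + w|} (1 : ℝ → ℝ) w ∂μ = Pfun μ χ u₀ :=
      integral_indicator_one (measSet χ u₀)
    exact h2 ▸ key.2
  · filter_upwards with w
    refine LipschitzOnWith.of_dist_le_mul ?_
    intro x _ y _
    rw [Real.dist_eq, Real.dist_eq]
    have : ((Real.nnabs (1:ℝ) : ℝ≥0) : ℝ) = 1 := by
      rw [Real.coe_nnabs, abs_one]
    rw [this, one_mul]
    have := st_lip hχ.le (x + w) (y + w)
    simpa using this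
  · filter_upwards [hae] with w hw
    have h := st_hasDerivAt_shift hχ (w := w) (u := u₀) hw
    refine h.congr_deriv ?_
    simp [Set.indicator_apply]

lemma hasDerivAt_Gfun (hχ : 0 < χ) (ha0 : 0 ≤ a) (ha1 : a ≤ 1)
    (hatom : ∀ x : ℝ, μ {x} = 0) (hmom : Integrable (fun w => w ^ 2) μ)
    (habs : Integrable (fun w => |w|) μ) (u₀ : ℝ) :
    HasDerivAt (Gfun μ a χ)
      (2 * u₀ - 2 * u₀ * a * Pfun μ χ u₀ - 2 * a * (1 - a) * mfun μ χ u₀) u₀ := by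
  have hae : ∀ᵐ w ∂μ, |u₀ + w| ≠ χ := by
    have hsub : {w : ℝ | ¬ |u₀ + w| ≠ χ} ⊆ {χ - u₀} ∪ {-χ - u₀} := by
      intro w hw
      simp only [Set.mem_setOf_eq, not_not] at hw
      rcases abs_eq (le_of_lt hχ) |>.mp hw with h | h
      · left; simp [show w = χ - u₀ by linarith]
      · right; simp [show w = -χ - u₀ by linarith]
    have h0 : μ ({χ - u₀} ∪ {-χ - u₀} : Set ℝ) = 0 :=
      le_antisymm (le_trans (measure_union_le _ _) (by rw [hatom, hatom]; simp)) zero_le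
    rw [ae_iff]
    exact le_antisymm (le_trans (measure_mono hsub) h0.le) zero_le
  have hstm : ∀ x : ℝ, AEStronglyMeasurable (fun w => (a * softThreshold (x + w) χ - x) ^ 2) μ := by
    intro x
    exact ((((st_measurable hχ.le).comp (measurable_const.add measurable_id)).const_mul a).sub
      measurable_const).pow_const 2 |>.aestronglyMeasurable
  have key := hasDerivAt_integral_of_dominated_loc_of_lip
    (F := fun x w => (a * softThreshold (x + w) χ - x) ^ 2)
    (F' := fun w => (-2 * a * (1 - a)) * softThreshold (u₀ + w) χ
      + (2 * u₀ + (-2 * u₀ * a) * Set.indicator {w : ℝ | χ < |u₀ + w|} (1 : ℝ → ℝ) w))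
    (x₀ := u₀) (bound := fun w => 8 * (|u₀| + 1) + 4 * |w|) (Metric.ball_mem_nhds u₀ one_pos)
    (Filter.Eventually.of_forall hstm)
    (integrable_sq hχ.le ha0 ha1 hmom habs u₀)
    ?_ ?_ ?_ ?_
  · have hint1 : Integrable (fun w => (-2 * a * (1 - a)) * softThreshold (u₀ + w) χ) μ :=
      (integrable_st hχ.le habs u₀).const_mul _
    have hind : Integrable (fun w => Set.indicator {w : ℝ | χ < |u₀ + w|} (1 : ℝ → ℝ) w) μ := by
      have := (integrable_const (1:ℝ) (μ := μ)).indicator (measSet χ u₀)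
      exact this
    have hint2 : Integrable
        (fun w => (2 * u₀ + (-2 * u₀ * a) * Set.indicator {w : ℝ | χ < |u₀ + w|} (1 : ℝ → ℝ) w)) μ :=
      (integrable_const _).add (hind.const_mul _)
    have heval : (∫ w, ((-2 * a * (1 - a)) * softThreshold (u₀ + w) χ
        + (2 * u₀ + (-2 * u₀ * a) * Set.indicator {w : ℝ | χ < |u₀ + w|} (1 : ℝ → ℝ) w)) ∂μ)
        = 2 * u₀ - 2 * u₀ * a * Pfun μ χ u₀ - 2 * a * (1 - a) * mfun μ χ u₀ := by
      rw [integral_add hint1 hint2, integral_add (integrable_const _) (hind.const_mul _),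
        integral_const_mul, integral_const_mul, integral_const_mul, integral_indicator_one (measSet χ u₀),
        integral_const]
      simp only [probReal_univ, ENNReal.toReal_one, smul_eq_mul, one_mul]
      have : mfun μ χ u₀ = ∫ w, softThreshold (u₀ + w) χ ∂μ := rfl
      rw [← this]
      have : Pfun μ χ u₀ = μ.real {w | χ < |u₀ + w|} := rfl
      rw [← this]
      ring
    exact heval ▸ key.2
  · exact ((((st_measurable hχ.le).comp (measurable_const.add measurable_id)).const_mul _).add
      (measurable_const.add ((measurable_const.indicator (measSet χ u₀)).const_mul _))).aestronglyMeasurable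
  · -- Lipschitz
    filter_upwards with w
    refine LipschitzOnWith.of_dist_le_mul ?_
    intro x hx y hy
    rw [Real.dist_eq, Real.dist_eq]
    have hcoe : ((Real.nnabs (8 * (|u₀| + 1) + 4 * |w|) : ℝ≥0) : ℝ) = 8 * (|u₀| + 1) + 4 * |w| := by
      rw [Real.coe_nnabs, abs_of_nonneg (by positivity)]
    rw [hcoe]
    have hxb : |x| ≤ |u₀| + 1 := by
      have := mem_ball_iff_norm.mp hx
      have h2 : |x - u₀| ≤ 1 := le_of_lt this
      calc |x| = |x - u₀ + u₀| := by ring_nf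
      _ ≤ |x - u₀| + |u₀| := abs_add_le _ _
      _ ≤ |u₀| + 1 := by linarith
    have hyb : |y| ≤ |u₀| + 1 := by
      have := mem_ball_iff_norm.mp hy
      have h2 : |y - u₀| ≤ 1 := le_of_lt this
      calc |y| = |y - u₀ + u₀| := by ring_nf
      _ ≤ |y - u₀| + |u₀| := abs_add_le _ _
      _ ≤ |u₀| + 1 := by linarith
    set s1 := softThreshold (x + w) χ
    set s2 := softThreshold (y + w) χ
    set p := a * s1 - x
    set q := a * s2 - y
    have hs1 : |s1| ≤ |x| + |w| := le_trans (st_abs_le hχ.le _) (abs_add_le _ _)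
    have hs2 : |s2| ≤ |y| + |w| := le_trans (st_abs_le hχ.le _) (abs_add_le _ _)
    have hpq : |p - q| ≤ 2 * |x - y| := by
      have h1 : |s1 - s2| ≤ |x - y| := by
        have := st_lip hχ.le (x + w) (y + w)
        simpa using this
      have : p - q = a * (s1 - s2) - (x - y) := by simp only [p, q]; ring
      rw [this]
      calc |a * (s1 - s2) - (x - y)| ≤ |a * (s1 - s2)| + |x - y| := abs_sub _ _
      _ = a * |s1 - s2| + |x - y| := by rw [abs_mul, abs_of_nonneg ha0]
      _ ≤ 2 * |x - y| := by nlinarith [abs_nonneg (s1 - s2)]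
    have hp : |p| ≤ 2 * (|u₀| + 1) + |w| := by
      calc |p| ≤ |a * s1| + |x| := abs_sub _ _
      _ = a * |s1| + |x| := by rw [abs_mul, abs_of_nonneg ha0]
      _ ≤ 2 * (|u₀| + 1) + |w| := by nlinarith [abs_nonneg s1]
    have hq : |q| ≤ 2 * (|u₀| + 1) + |w| := by
      calc |q| ≤ |a * s2| + |y| := abs_sub _ _
      _ = a * |s2| + |y| := by rw [abs_mul, abs_of_nonneg ha0]
      _ ≤ 2 * (|u₀| + 1) + |w| := by nlinarith [abs_nonneg s2]
    have key2 : |p ^ 2 - q ^ 2| ≤ (8 * (|u₀| + 1) + 4 * |w|) * |x - y| := by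
      have : p ^ 2 - q ^ 2 = (p - q) * (p + q) := by ring
      rw [this, abs_mul]
      have hsum : |p + q| ≤ 2 * (2 * (|u₀| + 1) + |w|) := by
        calc |p + q| ≤ |p| + |q| := abs_add_le _ _
        _ ≤ 2 * (2 * (|u₀| + 1) + |w|) := by linarith
      nlinarith [abs_nonneg (p - q), abs_nonneg (p + q), abs_nonneg (x - y)]
    exact key2
  · exact (integrable_const (8 * (|u₀| + 1))).add (habs.const_mul 4)
  · -- a.e. differentiability
    filter_upwards [hae] with w hw
    have hst := st_hasDerivAt_shift hχ (w := w) (u := u₀) hw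
    have h1 : HasDerivAt (fun x => a * softThreshold (x + w) χ - x)
        (a * (if χ < |u₀ + w| then 1 else 0) - 1) u₀ := (hst.const_mul a).sub (hasDerivAt_id u₀)
    have h2 := h1.pow 2
    refine h2.congr_deriv (Eq.symm ?_)
    by_cases hcond : χ < |u₀ + w|
    · have hmem : w ∈ {w : ℝ | χ < |u₀ + w|} := hcond
      rw [Set.indicator_of_mem hmem, if_pos hcond]
      simp only [Pi.one_apply]
      push_cast
      ring
    · have hnm : w ∉ {w : ℝ | χ < |u₀ + w|} := hcond
      have habs' : |u₀ + w| < χ := lt_of_le_of_ne (not_lt.mp hcond) hw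
      have hst0 : softThreshold (u₀ + w) χ = 0 := by
        rcases abs_lt.mp habs' with ⟨hl, hr⟩
        exact st_of_mem (by linarith) (by linarith)
      rw [Set.indicator_of_notMem hnm, if_neg hcond, hst0]
      push_cast
      ring

lemma Gfun_even (hχ : 0 ≤ χ) (hsym : μ.map (fun w => -w) = μ) (u : ℝ) :
    Gfun μ a χ (-u) = Gfun μ a χ u := by
  have hm : AEStronglyMeasurable (fun w => (a * softThreshold (u + w) χ - u) ^ 2) μ :=
    (((((st_measurable hχ).comp (measurable_const.add measurable_id)).const_mul a).sub
      measurable_const).pow_const 2).aestronglyMeasurable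
  have h := integral_comp_neg hsym hm
  have heq : (fun w : ℝ => (a * softThreshold (-u + w) χ - (-u)) ^ 2)
      = fun w => (a * softThreshold (u + -w) χ - u) ^ 2 := by
    funext w
    have : softThreshold (-u + w) χ = - softThreshold (u + -w) χ := by
      rw [← st_neg]; ring_nf
    rw [this]; ring
  show (∫ w, (a * softThreshold (-u + w) χ - (-u)) ^ 2 ∂μ) = Gfun μ a χ u
  rw [heq]
  exact h

lemma Gfun_mono (hχ : 0 < χ) (ha0 : 0 ≤ a) (ha1 : a ≤ 1)
    (hatom : ∀ x : ℝ, μ {x} = 0) (hmom : Integrable (fun w => w ^ 2) μ)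
    (habs : Integrable (fun w => |w|) μ) (hsym : μ.map (fun w => -w) = μ) :
    MonotoneOn (Gfun μ a χ) (Set.Ici 0) := by
  have hder := hasDerivAt_Gfun (μ := μ) hχ ha0 ha1 hatom hmom habs
  refine monotoneOn_of_deriv_nonneg (convex_Ici 0) ?_ ?_ ?_
  · exact fun x _ => ((hder x).differentiableAt.continuousAt).continuousWithinAt
  · exact fun x _ => (hder x).differentiableAt.differentiableWithinAt
  · intro x hx
    rw [interior_Ici] at hx
    rw [(hder x).deriv]
    have hP1 := Pfun_le_one μ χ x
    have hP0 := Pfun_nonneg μ χ x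
    have hx' : (0:ℝ) < x := hx
    have hm := mfun_le hχ.le hsym habs (le_of_lt hx')
    have h1 : 2 * x * a * Pfun μ χ x ≤ 2 * x * a := by
      have hc : (0:ℝ) ≤ 2 * x * a := by positivity
      have := mul_le_mul_of_nonneg_left hP1 hc
      nlinarith [this]
    have h2 : 2 * a * (1 - a) * mfun μ χ x ≤ 2 * a * (1 - a) * x := by
      have hc : 0 ≤ 2 * a * (1 - a) := by nlinarith
      nlinarith [mul_le_mul_of_nonneg_left hm hc]
    nlinarith [mul_nonneg (le_of_lt hx') (sq_nonneg (1 - a))]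

lemma mfun_ratio_mono (hχ : 0 < χ) (hatom : ∀ x : ℝ, μ {x} = 0)
    (habs : Integrable (fun w => |w|) μ) (hsym : μ.map (fun w => -w) = μ)
    (hP : MonotoneOn (Pfun μ χ) (Set.Ici 0))
    {u u' : ℝ} (hu : 0 < u) (huu' : u ≤ u') :
    mfun μ χ u / u ≤ mfun μ χ u' / u' := by
  have hu' : 0 < u' := lt_of_lt_of_le hu huu'
  have hder := hasDerivAt_mfun (μ := μ) hχ hatom habs
  have hconv : ConvexOn ℝ (Set.Ici 0) (mfun μ χ) := by
    refine MonotoneOn.convexOn_of_deriv (convex_Ici 0) ?_ ?_ ?_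
    · exact fun x _ => ((hder x).differentiableAt.continuousAt).continuousWithinAt
    · exact fun x _ => (hder x).differentiableAt.differentiableWithinAt
    · intro x hx y hy hxy
      rw [interior_Ici] at hx hy
      rw [(hder x).deriv, (hder y).deriv]
      exact hP (Set.mem_Ici.mpr (le_of_lt (Set.mem_Ioi.mp hx))) (Set.mem_Ici.mpr (le_of_lt (Set.mem_Ioi.mp hy))) hxy
  have h0 : mfun μ χ 0 = 0 := mfun_zero hχ.le hsym
  have hs := hconv.slope_mono (Set.self_mem_Ici)
  have hmem1 : u ∈ Set.Ici (0:ℝ) \ {0} := ⟨Set.mem_Ici.mpr hu.le, by simp [ne_of_gt hu]⟩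
  have hmem2 : u' ∈ Set.Ici (0:ℝ) \ {0} := ⟨Set.mem_Ici.mpr hu'.le, by simp [ne_of_gt hu']⟩
  have h := hs hmem1 hmem2 huu'
  rw [slope_def_field, slope_def_field, h0] at h
  simpa [sub_zero] using h

lemma Gfun_sqrt_concave (hχ : 0 < χ) (ha0 : 0 ≤ a) (ha1 : a ≤ 1)
    (hatom : ∀ x : ℝ, μ {x} = 0) (hmom : Integrable (fun w => w ^ 2) μ)
    (habs : Integrable (fun w => |w|) μ) (hsym : μ.map (fun w => -w) = μ)
    (hP : MonotoneOn (Pfun μ χ) (Set.Ici 0)) :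
    ConcaveOn ℝ (Set.Ici 0) (fun t => Gfun μ a χ (Real.sqrt t)) := by
  have hder := hasDerivAt_Gfun (μ := μ) hχ ha0 ha1 hatom hmom habs
  have hHder : ∀ t : ℝ, 0 < t → HasDerivAt (fun t => Gfun μ a χ (Real.sqrt t))
      ((2 * Real.sqrt t - 2 * Real.sqrt t * a * Pfun μ χ (Real.sqrt t)
        - 2 * a * (1 - a) * mfun μ χ (Real.sqrt t)) * (1 / (2 * Real.sqrt t))) t := by
    intro t ht
    exact (hder (Real.sqrt t)).comp t (Real.hasDerivAt_sqrt (ne_of_gt ht))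
  have hE : ∀ t : ℝ, 0 < t →
      (2 * Real.sqrt t - 2 * Real.sqrt t * a * Pfun μ χ (Real.sqrt t)
        - 2 * a * (1 - a) * mfun μ χ (Real.sqrt t)) * (1 / (2 * Real.sqrt t))
      = 1 - a * Pfun μ χ (Real.sqrt t)
        - a * (1 - a) * (mfun μ χ (Real.sqrt t) / Real.sqrt t) := by
    intro t ht
    have hs : Real.sqrt t ≠ 0 := by positivity
    field_simp
  refine AntitoneOn.concaveOn_of_deriv (convex_Ici 0) ?_ ?_ ?_
  · have hGc : Continuous (Gfun μ a χ) := by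
      have : Differentiable ℝ (Gfun μ a χ) := fun x => (hder x).differentiableAt
      exact this.continuous
    exact (hGc.comp Real.continuous_sqrt).continuousOn
  · intro t ht
    rw [interior_Ici] at ht
    exact ((hHder t ht).differentiableAt).differentiableWithinAt
  · intro t ht t' ht' htt'
    rw [interior_Ici] at ht ht'
    rw [(hHder t ht).deriv, (hHder t' ht').deriv, hE t ht, hE t' ht']
    have hst : 0 < Real.sqrt t := Real.sqrt_pos.mpr ht
    have hsr : Real.sqrt t ≤ Real.sqrt t' := Real.sqrt_le_sqrt htt'
    have hPm : Pfun μ χ (Real.sqrt t) ≤ Pfun μ χ (Real.sqrt t') :=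
      hP (Set.mem_Ici.mpr (Real.sqrt_nonneg t)) (Set.mem_Ici.mpr (Real.sqrt_nonneg t')) hsr
    have hMm : mfun μ χ (Real.sqrt t) / Real.sqrt t ≤ mfun μ χ (Real.sqrt t') / Real.sqrt t' :=
      mfun_ratio_mono hχ hatom habs hsym hP hst hsr
    have e1 : a * Pfun μ χ (Real.sqrt t) ≤ a * Pfun μ χ (Real.sqrt t') :=
      mul_le_mul_of_nonneg_left hPm ha0
    have e2 : a * (1 - a) * (mfun μ χ (Real.sqrt t) / Real.sqrt t)
        ≤ a * (1 - a) * (mfun μ χ (Real.sqrt t') / Real.sqrt t') :=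
      mul_le_mul_of_nonneg_left hMm (mul_nonneg ha0 (sub_nonneg.mpr ha1))
    linarith

section Mixture

variable (ν : Measure ℝ≥0) [IsProbabilityMeasure ν]

lemma mix_prob : IsProbabilityMeasure (mixtureLaw ν) := by
  constructor
  rw [mixtureLaw, Measure.bind_apply MeasurableSet.univ meas_ker.aemeasurable]
  simp [measure_univ]

lemma mix_sym : (mixtureLaw ν).map (fun x => -x) = mixtureLaw ν := by
  ext A hA
  rw [Measure.map_apply measurable_neg hA, mixtureLaw,
    Measure.bind_apply (measurable_neg hA) meas_ker.aemeasurable, Measure.bind_apply hA meas_ker.aemeasurable]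
  refine lintegral_congr fun s => ?_
  rw [← Measure.map_apply measurable_neg hA, g_sym]

lemma ae_ne_zero (hν0 : ν {0} = 0) : ∀ᵐ s ∂ν, s ≠ 0 := by
  rw [ae_iff]
  convert hν0 using 2
  ext s
  simp [not_not]

lemma mix_atom (hν0 : ν {0} = 0) (x : ℝ) : mixtureLaw ν {x} = 0 := by
  rw [mixtureLaw, Measure.bind_apply (measurableSet_singleton x) meas_ker.aemeasurable]
  rw [lintegral_congr_ae ((ae_ne_zero ν hν0).mono fun s hs => g_noatom hs x)]
  simp

lemma mix_mom (hν0 : ν {0} = 0) (hν : ∫⁻ s, (s : ℝ≥0∞) ∂ν < ⊤) :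
    Integrable (fun w : ℝ => w ^ 2) (mixtureLaw ν) := by
  refine ⟨(measurable_id.pow_const 2).aestronglyMeasurable, ?_⟩
  have heq : ∀ x : ℝ, ‖x ^ 2‖ₑ = ENNReal.ofReal (x ^ 2) := fun x =>
    (Real.enorm_eq_ofReal (sq_nonneg x))
  rw [HasFiniteIntegral]
  simp_rw [heq]
  have hfm : Measurable fun a : ℝ => ENNReal.ofReal (a ^ 2) :=
    (measurable_id.pow_const 2).ennreal_ofReal
  rw [mixtureLaw, Measure.lintegral_bind meas_ker.aemeasurable hfm.aemeasurable]
  have hle : ∫⁻ s, (∫⁻ x, ENNReal.ofReal (x ^ 2) ∂gaussianReal 0 s) ∂ν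
      ≤ ∫⁻ s, 3 * (s : ℝ≥0∞) ∂ν := by
    refine lintegral_mono_ae ((ae_ne_zero ν hν0).mono fun s hs => g_mom hs)
  refine lt_of_le_of_lt hle ?_
  rw [lintegral_const_mul 3 measurable_coe_nnreal_ennreal]
  exact ENNReal.mul_lt_top (by simp) hν

lemma mix_abs (hmom : Integrable (fun w : ℝ => w ^ 2) (mixtureLaw ν)) :
    Integrable (fun w : ℝ => |w|) (mixtureLaw ν) := by
  have : IsProbabilityMeasure (mixtureLaw ν) := mix_prob ν
  refine Integrable.mono' ((integrable_const 1).add hmom)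
    measurable_abs.aestronglyMeasurable ?_
  filter_upwards with w
  have h1 : ‖|w|‖ = |w| := by rw [Real.norm_eq_abs, abs_abs]
  rw [h1]
  simp only [Pi.add_apply]
  nlinarith [sq_abs w, abs_nonneg w, sq_nonneg (|w| - 1)]

lemma mix_Pmono (hν0 : ν {0} = 0) {χ : ℝ} (hχ : 0 < χ) :
    MonotoneOn (Pfun (mixtureLaw ν) χ) (Set.Ici 0) := by
  intro u hu v hv huv
  unfold Pfun
  refine ENNReal.toReal_mono ?_ ?_
  · have : IsProbabilityMeasure (mixtureLaw ν) := mix_prob ν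
    exact measure_ne_top _ _
  · rw [mixtureLaw, Measure.bind_apply (measSet χ u) meas_ker.aemeasurable,
      Measure.bind_apply (measSet χ v) meas_ker.aemeasurable]
    exact lintegral_mono_ae ((ae_ne_zero ν hν0).mono fun s hs =>
      g_tail_mono hs hχ hu huv)

end Mixture


end SoftAux

open SoftAux

/-- **Lemma 19.** Let `ω` be a centered Gaussian mixture, i.e. `ω | θ ~ N(0, σ_θ²)` with
`σ_θ > 0` a.s. and `E σ_θ² < ∞` (encoded via the variance law `ν`, a probability measure
with `ν{0} = 0` and finite mean). For `χ₁ > 0`, `χ₂ ≥ 0`: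
(i) `u ↦ g(u; χ₁, χ₂)` is even and nondecreasing on `[0, ∞)`;
(ii) for every `c > 0`, the maximum of `g(x) + g(y)` over `x² + y² = c²` equals
`2 g(c/√2)`. -/
theorem soft_threshold_mixture_risk_properties
    (ν : Measure ℝ≥0) [IsProbabilityMeasure ν] (hν0 : ν {0} = 0)
    (hνmean : ∫⁻ s, (s : ℝ≥0∞) ∂ν < ⊤)
    (χ₁ χ₂ : ℝ) (hχ₁ : 0 < χ₁) (hχ₂ : 0 ≤ χ₂) :
    (∀ u : ℝ, gRisk ν χ₁ χ₂ (-u) = gRisk ν χ₁ χ₂ u) ∧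
    (∀ u v : ℝ, 0 ≤ u → u ≤ v → gRisk ν χ₁ χ₂ u ≤ gRisk ν χ₁ χ₂ v) ∧
    (∀ c : ℝ, 0 < c →
      IsGreatest {r : ℝ | ∃ x y : ℝ, x ^ 2 + y ^ 2 = c ^ 2 ∧
          r = gRisk ν χ₁ χ₂ x + gRisk ν χ₁ χ₂ y}
        (2 * gRisk ν χ₁ χ₂ (c / Real.sqrt 2))) := by
  have hprob : IsProbabilityMeasure (mixtureLaw ν) := mix_prob ν
  set μ := mixtureLaw ν with hμ
  set a : ℝ := 1 / (1 + χ₂) with ha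
  have h1χ : (0:ℝ) < 1 + χ₂ := by linarith
  have ha0 : 0 < a := by positivity
  have ha1 : a ≤ 1 := by
    rw [ha, div_le_one h1χ]; linarith
  have hg : gRisk ν χ₁ χ₂ = Gfun μ a χ₁ := rfl
  have hsym : μ.map (fun w => -w) = μ := mix_sym ν
  have hatom : ∀ x : ℝ, μ {x} = 0 := mix_atom ν hν0
  have hmom : Integrable (fun w : ℝ => w ^ 2) μ := mix_mom ν hν0 hνmean
  have habs : Integrable (fun w : ℝ => |w|) μ := mix_abs ν hmom
  have hP : MonotoneOn (Pfun μ χ₁) (Set.Ici 0) := mix_Pmono ν hν0 hχ₁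
  have heven : ∀ u : ℝ, Gfun μ a χ₁ (-u) = Gfun μ a χ₁ u :=
    Gfun_even hχ₁.le hsym
  have hmono : MonotoneOn (Gfun μ a χ₁) (Set.Ici 0) :=
    Gfun_mono hχ₁ ha0.le ha1 hatom hmom habs hsym
  have hconc : ConcaveOn ℝ (Set.Ici 0) (fun t => Gfun μ a χ₁ (Real.sqrt t)) :=
    Gfun_sqrt_concave hχ₁ ha0.le ha1 hatom hmom habs hsym hP
  have habs_eq : ∀ x : ℝ, Gfun μ a χ₁ x = Gfun μ a χ₁ (Real.sqrt (x ^ 2)) := by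
    intro x
    rw [Real.sqrt_sq_eq_abs]
    rcases abs_cases x with ⟨h, _⟩ | ⟨h, _⟩
    · rw [h]
    · rw [h, heven]
  refine ⟨fun u => (hg ▸ heven u), fun u v hu huv => hg ▸ hmono (Set.mem_Ici.mpr hu)
    (Set.mem_Ici.mpr (hu.trans huv)) huv, ?_⟩
  intro c hc
  have hsqrt2 : (0:ℝ) < Real.sqrt 2 := by positivity
  have hc2 : (c / Real.sqrt 2) ^ 2 = c ^ 2 / 2 := by
    rw [div_pow, Real.sq_sqrt (by norm_num : (0:ℝ) ≤ 2)]
  constructor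
  · refine ⟨c / Real.sqrt 2, c / Real.sqrt 2, ?_, ?_⟩
    · rw [hc2]; ring
    · rw [hg]; ring
  · rintro r ⟨x, y, hxy, hr⟩
    rw [hr, hg]
    have hx2 : (0:ℝ) ≤ x ^ 2 := sq_nonneg x
    have hy2 : (0:ℝ) ≤ y ^ 2 := sq_nonneg y
    have hcomb := hconc.2 (Set.mem_Ici.mpr hx2) (Set.mem_Ici.mpr hy2)
      (by norm_num : (0:ℝ) ≤ (1:ℝ)/2) (by norm_num : (0:ℝ) ≤ (1:ℝ)/2) (by norm_num)
    simp only [smul_eq_mul] at hcomb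
    have hmid : (1:ℝ)/2 * x ^ 2 + (1:ℝ)/2 * y ^ 2 = c ^ 2 / 2 := by
      rw [← hxy]; ring
    rw [hmid] at hcomb
    have hcs : Real.sqrt (c ^ 2 / 2) = c / Real.sqrt 2 := by
      rw [← hc2, Real.sqrt_sq (by positivity)]
    rw [hcs] at hcomb
    have hgx := habs_eq x
    have hgy := habs_eq y
    linarith [hcomb, hgx ▸ le_refl (Gfun μ a χ₁ x)]
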